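/- For every j ∈ {0,…,4} and m ∈ {2,3}, the vector c^j • R_m lies on the quadric cone: ∑ i, (c^j • R_m) i = 0 and ∑ i, ((c^j • R_m) i)² = 0. In contrast, for every j ∈ {0,…,4}, ∑ i, ((c^j • R₁) i)² ≠ 0. (The two length-5 orbits 𝒪₂ and 𝒪₃ lie on the quadric Q ≅ ℙ¹ × ℙ¹, while the orbit 𝒪₁ does not.) -/

import Mathlib

/-- The 5-cycle `(0 1 2 3 4)` on `Fin 5`, sending `i` to `i + 1 (mod 5)`. -/
def c : Equiv.Perm (Fin 5) := finRotate 5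

/-- The linear action of a permutation `g` on vectors: `(g • v) i = v (g⁻¹ i)`. -/
def permSMul (g : Equiv.Perm (Fin 5)) (v : Fin 5 → ℂ) : Fin 5 → ℂ := fun i => v (g⁻¹ i)

def R₁ : Fin 5 → ℂ := ![0, -1, 1, 1, -1]
def R₂ : Fin 5 → ℂ := ![0, -Complex.I, -1, 1, Complex.I]
def R₃ : Fin 5 → ℂ := ![0, Complex.I, -1, 1, -Complex.I]

lemma sum_permSMul (g : Equiv.Perm (Fin 5)) (v : Fin 5 → ℂ) (f : ℂ → ℂ) :
    ∑ i, f (permSMul g v i) = ∑ i, f (v i) := by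
  simpa [permSMul] using Equiv.sum_comp g⁻¹ (fun i => f (v i))

theorem stmt10 :
    (∀ j : Fin 5, ∀ Rm ∈ ({R₂, R₃} : Set (Fin 5 → ℂ)),
      (∑ i, permSMul (c ^ (j : ℕ)) Rm i) = 0 ∧
      (∑ i, (permSMul (c ^ (j : ℕ)) Rm i) ^ 2) = 0) ∧
    (∀ j : Fin 5, (∑ i, (permSMul (c ^ (j : ℕ)) R₁ i) ^ 2) ≠ 0) := by
  constructor
  · intro j Rm hRm
    have h1 := sum_permSMul (c ^ (j : ℕ)) Rm (fun x => x)
    have h2 := sum_permSMul (c ^ (j : ℕ)) Rm (fun x => x ^ 2)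
    rw [h1, h2]
    rcases hRm with rfl | rfl <;>
      constructor <;>
      simp [R₂, R₃, Fin.sum_univ_five, Complex.I_sq]
  · intro j
    have h2 := sum_permSMul (c ^ (j : ℕ)) R₁ (fun x => x ^ 2)
    rw [h2]
    simp [R₁, Fin.sum_univ_five]
    norm_num
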